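/- Let (R, M) be a local sQQR-domain which is not integrally closed. Then R has Krull dimension at least 2, and M is not minimal over any nonzero principal ideal. -/

import Mathlib

noncomputable section

/-- The image of `A` in `L` under the algebra map, as a set. -/
def imageR (A L : Type*) [CommRing A] [CommRing L] [Algebra A L] : Set L :=
  Set.range (algebraMap A L)

/-- The Kaplansky transform of an ideal `I` of `A`, computed inside `L`. -/
def omegaSet (A L : Type*) [CommRing A] [CommRing L] [Algebra A L] (I : Ideal A) : Set L :=
  {x : L | ∀ a ∈ I, ∃ n : ℕ, 1 ≤ n ∧ ∃ r : A, (algebraMap A L a) ^ n * x = algebraMap A L r}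

/-- The localization of `A` at the prime `P`, viewed as a subset of `L`. -/
def locSet (A L : Type*) [CommRing A] [CommRing L] [Algebra A L] (P : Ideal A) : Set L :=
  {x : L | ∃ s : A, s ∉ P ∧ ∃ r : A, x * algebraMap A L s = algebraMap A L r}

/-- The conductor ideal `(A :_A U) = {r : A | r • U ⊆ A}`. -/
def condIdeal (A L : Type*) [CommRing A] [CommRing L] [Algebra A L] (U : Set L) : Ideal A where
  carrier := {r : A | ∀ u ∈ U, ∃ r' : A, algebraMap A L r * u = algebraMap A L r'}
  zero_mem' := fun u _ => ⟨0, by simp⟩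
  add_mem' := by
    rintro a b ha hb u hu
    obtain ⟨a', ha'⟩ := ha u hu
    obtain ⟨b', hb'⟩ := hb u hu
    exact ⟨a' + b', by rw [map_add, map_add, add_mul, ha', hb']⟩
  smul_mem' := by
    rintro c r h u hu
    obtain ⟨r', hr'⟩ := h u hu
    exact ⟨c * r', by rw [smul_eq_mul, map_mul, map_mul, mul_assoc, hr']⟩

/-- A domain is an sQQR-domain if every simple overring `R[u]`, `u` in the quotient field,
is an intersection of localizations of `R` at primes. -/
def IsSQQR (A : Type*) [CommRing A] [IsDomain A] : Prop :=
  ∀ u : FractionRing A, ∃ Ps : Set (Ideal A), (∀ P ∈ Ps, P.IsPrime) ∧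
    (↑(Algebra.adjoin A {u} : Subalgebra A (FractionRing A)) : Set (FractionRing A)) =
      ⋂ P ∈ Ps, locSet A (FractionRing A) P

/-- A Prüfer domain: every localization at a prime is a valuation domain. -/
def IsPrufer (A : Type*) [CommRing A] [IsDomain A] : Prop :=
  ∀ (P : Ideal A) (hP : P.IsPrime),
    haveI := hP
    letI : IsDomain (Localization.AtPrime P) := IsLocalization.isDomain_of_local_atPrime hP
    ValuationRing (Localization.AtPrime P)

section Aux
variable {R : Type*} [CommRing R] [IsDomain R]

/-- If the inverse of `a` in the fraction field is integral over `R`, then `a` is a unit. -/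
lemma aux_isUnit_of_inv_integral {a : R} {x : FractionRing R}
    (hx1 : x * algebraMap R (FractionRing R) a = 1) (hx : IsIntegral R x) : IsUnit a := by
  classical
  obtain ⟨p, hp, hev⟩ := hx
  set f := algebraMap R (FractionRing R) with hf
  set n := p.natDegree with hn
  have hinj : Function.Injective f := IsFractionRing.injective R (FractionRing R)
  have hn1 : 1 ≤ n := by
    rcases Nat.eq_zero_or_pos n with h0 | h
    · exfalso
      have hp1 : p = 1 := (Polynomial.Monic.natDegree_eq_zero hp).mp h0
      rw [hp1] at hev
      simp at hev
    · exact h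
  have hax : f a * x = 1 := by rw [mul_comm]; exact hx1
  have hterm : ∀ i ≤ n, (f a) ^ n * x ^ i = f (a ^ (n - i)) := by
    intro i hi
    have h2 : (f a) ^ n = (f a) ^ (n - i) * (f a) ^ i := by
      rw [← pow_add]; congr 1; omega
    rw [h2, mul_assoc, ← mul_pow, hax, one_pow, mul_one, map_pow]
  have hsum : f (∑ i ∈ Finset.range (n + 1), p.coeff i * a ^ (n - i)) = 0 := by
    have heq := Polynomial.eval₂_eq_sum_range (p := p) f x
    calc f (∑ i ∈ Finset.range (n + 1), p.coeff i * a ^ (n - i))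
        = ∑ i ∈ Finset.range (n + 1), f (p.coeff i) * ((f a) ^ n * x ^ i) := by
          rw [map_sum]
          refine Finset.sum_congr rfl fun i hi => ?_
          rw [hterm i (Nat.lt_succ_iff.mp (Finset.mem_range.mp hi)), map_mul]
      _ = (f a) ^ n * ∑ i ∈ Finset.range (n + 1), f (p.coeff i) * x ^ i := by
          rw [Finset.mul_sum]; exact Finset.sum_congr rfl fun i _ => by ring
      _ = (f a) ^ n * Polynomial.eval₂ f x p := by rw [← heq]
      _ = 0 := by rw [hev, mul_zero]
  have hS : (∑ i ∈ Finset.range (n + 1), p.coeff i * a ^ (n - i)) = 0 := by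
    apply hinj; rw [hsum, map_zero]
  rw [Finset.sum_range_succ] at hS
  have hcn : p.coeff n = 1 := hp.coeff_natDegree
  rw [hcn, Nat.sub_self, pow_zero, one_mul] at hS
  have hfac : (∑ i ∈ Finset.range n, p.coeff i * a ^ (n - i))
      = a * ∑ i ∈ Finset.range n, p.coeff i * a ^ (n - 1 - i) := by
    rw [Finset.mul_sum]
    refine Finset.sum_congr rfl fun i hi => ?_
    have hi' : i < n := Finset.mem_range.mp hi
    have h3 : n - i = (n - 1 - i) + 1 := by omega
    rw [h3, pow_succ]; ring
  rw [hfac] at hS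
  exact IsUnit.of_mul_eq_one (a := a) (-∑ i ∈ Finset.range n, p.coeff i * a ^ (n - 1 - i))
    (by linear_combination -hS)

/-- The localization at the maximal ideal of a local domain is just `R` itself. -/
lemma aux_locSet_max [IsLocalRing R] :
    locSet R (FractionRing R) (IsLocalRing.maximalIdeal R) ⊆
      Set.range (algebraMap R (FractionRing R)) := by
  rintro x ⟨s, hs, r, hr⟩
  have hsu : IsUnit s := by
    by_contra hns
    exact hs hns
  obtain ⟨v, rfl⟩ := hsu
  refine ⟨r * ↑v⁻¹, ?_⟩
  have hv : IsUnit (algebraMap R (FractionRing R) ↑v) := v.isUnit.map _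
  apply mul_right_cancel₀ hv.ne_zero
  rw [hr, ← map_mul, mul_assoc]
  norm_cast
  simp

end Aux

theorem stmt9 (R : Type*) [CommRing R] [IsDomain R] [IsLocalRing R] (h1 : IsSQQR R)
    (h2 : ¬ IsIntegrallyClosed R) :
    2 ≤ ringKrullDim R ∧
      ∀ a : R, a ≠ 0 → IsLocalRing.maximalIdeal R ∉ (Ideal.span {a}).minimalPrimes := by
  classical
  set M := IsLocalRing.maximalIdeal R with hMdef
  -- Part 2 first.
  have key : ∀ a : R, a ≠ 0 → M ∉ (Ideal.span {a}).minimalPrimes := by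
    intro a ha hmin
    have haM : a ∈ M := hmin.1.2 (Ideal.subset_span rfl)
    -- a non-integrally-closed element
    obtain ⟨u, hu_int, hu_not⟩ : ∃ u : FractionRing R, IsIntegral R u ∧
        ¬∃ y, algebraMap R (FractionRing R) y = u := by
      by_contra h
      push_neg at h
      exact h2 ((isIntegrallyClosed_iff (FractionRing R)).mpr fun {x} hx => h x hx)
    obtain ⟨Ps, hPs, hEq⟩ := h1 u
    -- M is not one of the primes in the decomposition
    have hMnot : M ∉ Ps := by
      intro hM
      apply hu_not
      have humem : u ∈ (↑(Algebra.adjoin R {u} : Subalgebra R (FractionRing R)) :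
          Set (FractionRing R)) := Algebra.self_mem_adjoin_singleton R u
      rw [hEq] at humem
      exact aux_locSet_max (Set.mem_iInter₂.mp humem M hM)
    -- the inverse of a lies in every localization appearing
    have hfa : algebraMap R (FractionRing R) a ≠ 0 := by
      intro h
      exact ha (IsFractionRing.injective R (FractionRing R) (by rw [h, map_zero]))
    set x : FractionRing R := (algebraMap R (FractionRing R) a)⁻¹ with hxdef
    have hx1 : x * algebraMap R (FractionRing R) a = 1 := inv_mul_cancel₀ hfa
    have hxmem : x ∈ (↑(Algebra.adjoin R {u} : Subalgebra R (FractionRing R)) :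
        Set (FractionRing R)) := by
      rw [hEq]
      refine Set.mem_iInter₂.mpr fun P hP => ?_
      have hPprime := hPs P hP
      have hPle : P ≤ M := IsLocalRing.le_maximalIdeal hPprime.ne_top
      have haP : a ∉ P := by
        intro haP
        have hMP : M ≤ P := hmin.2 ⟨hPprime, Ideal.span_le.mpr (Set.singleton_subset_iff.mpr haP)⟩
          hPle
        exact hMnot (le_antisymm hPle hMP ▸ hP)
      exact ⟨a, haP, 1, by rw [map_one]; exact hx1⟩
    -- hence it is integral over R, so a is a unit; contradiction
    have hxint : IsIntegral R x :=
      IsIntegral.of_mem_of_fg _ hu_int.fg_adjoin_singleton x hxmem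
    have : IsUnit a := aux_isUnit_of_inv_integral hx1 hxint
    exact haM this
  refine ⟨?_, key⟩
  -- Part 1: Krull dimension at least 2.
  have hMne : M ≠ ⊥ := by
    intro h
    apply h2
    have hfield : IsField R := IsLocalRing.isField_iff_maximalIdeal_eq.mpr h
    letI := hfield.toField
    infer_instance
  obtain ⟨b, hbM, hb0⟩ := Submodule.exists_mem_ne_zero_of_ne_bot hMne
  have hbspan : Ideal.span {b} ≤ M := Ideal.span_le.mpr (Set.singleton_subset_iff.mpr hbM)
  obtain ⟨Q, hQmin, hQle⟩ := Ideal.exists_minimalPrimes_le hbspan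
  have hQprime : Q.IsPrime := hQmin.1.1
  have hQM : Q ≠ M := fun h => key b hb0 (h ▸ hQmin)
  have hQbot : Q ≠ ⊥ := by
    intro h
    have : b ∈ Q := hQmin.1.2 (Ideal.subset_span rfl)
    rw [h] at this
    exact hb0 (Ideal.mem_bot.mp this)
  -- build a chain of primes of length 2
  let p0 : PrimeSpectrum R := ⟨⊥, Ideal.bot_prime⟩
  let p1 : PrimeSpectrum R := ⟨Q, hQprime⟩
  let p2 : PrimeSpectrum R := ⟨M, Ideal.IsMaximal.isPrime (IsLocalRing.maximalIdeal.isMaximal R)⟩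
  have h01 : p0 < p1 := (PrimeSpectrum.asIdeal_lt_asIdeal p0 p1).mp (bot_lt_iff_ne_bot.mpr hQbot)
  have h12 : p1 < p2 := (PrimeSpectrum.asIdeal_lt_asIdeal p1 p2).mp (lt_of_le_of_ne hQle hQM)
  let c : LTSeries (PrimeSpectrum R) :=
    ((RelSeries.singleton {(a, b) : PrimeSpectrum R × PrimeSpectrum R | a < b} p0).snoc p1 (by simpa using h01)).snoc p2
      (by rw [RelSeries.last_snoc]; exact h12)
  have hlen := Order.LTSeries.length_le_krullDim c
  have hc : c.length = 2 := rfl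
  rw [hc] at hlen
  rw [ringKrullDim]
  exact_mod_cast hlen

end
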